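/- Let W be a d×d matrix A₂ weight on ℝ and let W_n(x) = φ_n(W(x)) be the eigenvalue truncation of W, where φ_n(t) = min(max(t, 1/n), n) is applied via the functional calculus for Hermitian matrices. Then for every bounded interval I, Tr(⟨W_n⟩_I ⟨W_n^{-1}⟩_I) ≤ 2d + Tr(⟨W⟩_I ⟨W^{-1}⟩_I). -/

import Mathlib

open MeasureTheory Matrix Filter
open scoped ENNReal ComplexOrder

noncomputable section

abbrev Vec (d : ℕ) := Fin d → ℂ
abbrev Mat (d : ℕ) := Matrix (Fin d) (Fin d) ℂ

/-- The standard dyadic interval `[2^{-k} n, 2^{-k}(n+1))`. -/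
def dyadI (k n : ℤ) : Set ℝ := Set.Ico ((2:ℝ) ^ (-k) * n) ((2:ℝ) ^ (-k) * (n + 1))

/-- The Haar function of the dyadic interval indexed by `(k, n)`. -/
def haar (k n : ℤ) (x : ℝ) : ℝ :=
  Real.sqrt ((2:ℝ) ^ k) *
    ((dyadI (k+1) (2*n+1)).indicator (fun _ => (1:ℝ)) x -
      (dyadI (k+1) (2*n)).indicator (fun _ => (1:ℝ)) x)

/-- The non-cancellative Haar function `h_I^1 = 1_I / |I|`. -/
def hone (k n : ℤ) (x : ℝ) : ℝ := (dyadI k n).indicator (fun _ => (2:ℝ) ^ k) x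

/-- Haar coefficient `f̂(I) = ∫ f · h_I`. -/
def fhat {d : ℕ} (f : ℝ → Vec d) (k n : ℤ) : Vec d :=
  ∫ x in dyadI k n, ((haar k n x : ℝ) : ℂ) • f x

/-- Average of a vector-valued function over a dyadic interval. -/
def vavg {d : ℕ} (g : ℝ → Vec d) (k n : ℤ) : Vec d :=
  (2:ℝ) ^ k • ∫ x in dyadI k n, g x

/-- Average `⟨W⟩_I` of a matrix-valued function over a dyadic interval. -/
def avgD {d : ℕ} (W : ℝ → Mat d) (k n : ℤ) : Mat d :=
  Matrix.of fun i j => (2:ℝ) ^ k • ∫ x in dyadI k n, W x i j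

/-- Average `⟨W⟩_{[a,b)}` of a matrix-valued function over an interval. -/
def avgI {d : ℕ} (W : ℝ → Mat d) (a b : ℝ) : Mat d :=
  Matrix.of fun i j => (b - a)⁻¹ • ∫ x in Set.Ico a b, W x i j

/-- Inner product on `ℂ^d`, linear in the first entry. -/
def ip {d : ℕ} (u v : Vec d) : ℂ := ∑ i, u i * (starRingEnd ℂ) (v i)

/-- Squared Euclidean norm on `ℂ^d`. -/
def vnSq {d : ℕ} (u : Vec d) : ℝ := ∑ i, ‖u i‖ ^ 2

/-- Quadratic form `⟨A u, u⟩`. -/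
def qf {d : ℕ} (A : Mat d) (u : Vec d) : ℝ := (ip (A.mulVec u) u).re

/-- Operator norm of a matrix acting on `ℂ^d`. -/
def mOpNorm {d : ℕ} (A : Mat d) : ℝ := ‖Matrix.toEuclideanCLM (𝕜 := ℂ) A‖

/-- The positive semidefinite square root (junk value `0` if not psd). -/
def msqrt {d : ℕ} (A : Mat d) : Mat d :=
  @dite _ A.PosSemidef (Classical.dec _) (fun h => (h.1.eigenvectorUnitary : Mat d) *
    Matrix.diagonal (fun i => ((Real.sqrt (h.1.eigenvalues i) : ℝ) : ℂ)) *
    (star (h.1.eigenvectorUnitary : Mat d))) (fun _ => 0)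

/-- `‖f‖²_{L²(W)}`, valued in `[0,∞]`. -/
def wNormSq {d : ℕ} (W : ℝ → Mat d) (f : ℝ → Vec d) : ℝ≥0∞ :=
  ∫⁻ x, ENNReal.ofReal (qf (W x) (f x))

/-- `‖f‖²_{L²(ℝ,ℂ^d)}`, valued in `[0,∞]`. -/
def l2NormSq {d : ℕ} (f : ℝ → Vec d) : ℝ≥0∞ :=
  ∫⁻ x, ENNReal.ofReal (vnSq (f x))

/-- The weighted square function sum `∑_{I ∈ 𝒟} ⟨⟨W⟩_I f̂(I), f̂(I)⟩`. -/
def sqSum {d : ℕ} (W : ℝ → Mat d) (f : ℝ → Vec d) : ℝ≥0∞ :=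
  ∑' p : ℤ × ℤ, ENNReal.ofReal (qf (avgD W p.1 p.2) (fhat f p.1 p.2))

/-- `W` is a matrix weight: locally integrable entries, a.e. positive semidefinite values. -/
def IsMatrixWeight {d : ℕ} (W : ℝ → Mat d) : Prop :=
  (∀ i j, LocallyIntegrable (fun x => W x i j) volume) ∧
  (∀ᵐ x ∂volume, (W x).PosSemidef)

/-- `K` bounds the `A₂` characteristic `sup_I ‖⟨W⟩_I^{1/2} ⟨W^{-1}⟩_I^{1/2}‖²` of `W`. -/
def A2Bound {d : ℕ} (W : ℝ → Mat d) (K : ℝ) : Prop :=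
  ∀ a b : ℝ, a < b →
    mOpNorm (msqrt (avgI W a b) * msqrt (avgI (fun x => (W x)⁻¹) a b)) ^ 2 ≤ K

/-- `W` is a matrix `A₂` weight with `A₂` characteristic at most `K` (and `1 ≤ K`,
as the characteristic is always at least `1`).  The positive definiteness of the
averages of `W` and `W⁻¹` is recorded as well. -/
def IsA2Weight {d : ℕ} (W : ℝ → Mat d) (K : ℝ) : Prop :=
  IsMatrixWeight W ∧ (∀ᵐ x ∂volume, IsUnit (W x).det) ∧
  IsMatrixWeight (fun x => (W x)⁻¹) ∧ 1 ≤ K ∧ A2Bound W K ∧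
  (∀ a b : ℝ, a < b → (avgI W a b).PosDef) ∧
  (∀ a b : ℝ, a < b → (avgI (fun x => (W x)⁻¹) a b).PosDef) ∧
  (∀ k n : ℤ, (avgD W k n).PosDef) ∧
  (∀ k n : ℤ, (avgD (fun x => (W x)⁻¹) k n).PosDef)


/-- The clamping function `φ_m(t) = min (max t (1/m)) m`. -/
def clampFun (m : ℕ) (t : ℝ) : ℝ := min (max t ((m:ℝ)⁻¹)) (m:ℝ)

/-- The eigenvalue truncation `W_m(x) = φ_m(W(x))`, via the functional calculus
for Hermitian matrices (junk value `0` at the null set where `W x` is not Hermitian). -/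
def truncW {d : ℕ} (W : ℝ → Mat d) (m : ℕ) (x : ℝ) : Mat d :=
  @dite _ (W x).IsHermitian (Classical.dec _) (fun h => h.cfc (clampFun m)) (fun _ => 0)


section Aux
open Polynomial
variable {d : ℕ}

lemma clamp_pos {m : ℕ} (hm : 1 ≤ m) (t : ℝ) : 0 < clampFun m t := by
  have h1 : (0:ℝ) < m := by exact_mod_cast hm
  have : (0:ℝ) < (m:ℝ)⁻¹ := by positivity
  simp only [clampFun, lt_min_iff]
  exact ⟨lt_max_of_lt_right this, h1⟩

lemma clamp_le {m : ℕ} (t : ℝ) : clampFun m t ≤ m := min_le_right _ _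

lemma clamp_inv_le {m : ℕ} (hm : 1 ≤ m) (t : ℝ) : (clampFun m t)⁻¹ ≤ m := by
  have h1 : (1:ℝ) ≤ m := by exact_mod_cast hm
  have h0 : (0:ℝ) < m := by linarith
  have h2 : (m:ℝ)⁻¹ ≤ clampFun m t := by
    refine le_min (le_max_right _ _) ?_
    calc (m:ℝ)⁻¹ ≤ 1 := by rw [inv_le_one_iff₀]; right; exact h1
      _ ≤ m := h1
  calc (clampFun m t)⁻¹ ≤ ((m:ℝ)⁻¹)⁻¹ := by
        exact inv_anti₀ (by positivity) h2
    _ = m := inv_inv _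

lemma clamp_mono {m : ℕ} : Monotone (clampFun m) := fun s t h =>
  min_le_min (max_le_max h le_rfl) le_rfl

lemma clamp_continuous (m : ℕ) : Continuous (clampFun m) := by
  unfold clampFun; fun_prop

lemma clamp_ratio {m : ℕ} (hm : 1 ≤ m) {α β : ℝ} (hα : 0 ≤ α) (hβ : 0 < β) :
    clampFun m α * (clampFun m β)⁻¹ ≤ 1 + α * β⁻¹ := by
  have hcβ := clamp_pos hm β
  have hcα := clamp_pos hm α
  rcases le_total α β with h | h
  · have h1 : clampFun m α ≤ clampFun m β := clamp_mono h
    have h2 : clampFun m α * (clampFun m β)⁻¹ ≤ 1 := by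
      rw [mul_inv_le_iff₀ hcβ, one_mul]; exact h1
    have h3 : 0 ≤ α * β⁻¹ := by positivity
    linarith
  · have hα' : 0 < α := lt_of_lt_of_le hβ h
    have key : clampFun m α * β ≤ clampFun m β * α := by
      have h1 : (0:ℝ) < m := by exact_mod_cast hm
      have hc : (0:ℝ) < (m:ℝ)⁻¹ := by positivity
      rcases le_total α (m:ℝ) with ham | ham
      · rcases le_total ((m:ℝ)⁻¹) α with hca | hca
        · have e1 : clampFun m α ≤ α := min_le_of_left_le (max_le le_rfl hca)
          have e2 : β ≤ clampFun m β := le_min (le_max_left _ _) (le_trans h ham)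
          nlinarith
        · have hbc : β ≤ (m:ℝ)⁻¹ := le_trans h hca
          have hmm : (m:ℝ)⁻¹ ≤ m := by
            calc (m:ℝ)⁻¹ ≤ 1 := by rw [inv_le_one_iff₀]; right; exact_mod_cast hm
              _ ≤ m := by exact_mod_cast hm
          have e1 : clampFun m α = (m:ℝ)⁻¹ := by
            rw [clampFun, max_eq_right hca, min_eq_left hmm]
          have e2 : clampFun m β = (m:ℝ)⁻¹ := by
            rw [clampFun, max_eq_right hbc, min_eq_left hmm]
          rw [e1, e2]; nlinarith
      · have e1 : clampFun m α ≤ m := min_le_right _ _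
        have e2' : min β (m:ℝ) ≤ clampFun m β := min_le_min (le_max_left _ _) le_rfl
        rcases le_total β (m:ℝ) with hbm | hbm
        · have e2 : β ≤ clampFun m β := by rw [min_eq_left hbm] at e2'; exact e2'
          nlinarith
        · have e2 : (m:ℝ) ≤ clampFun m β := by rw [min_eq_right hbm] at e2'; exact e2'
          nlinarith
    have h4 : clampFun m α * (clampFun m β)⁻¹ ≤ α * β⁻¹ := by
      rw [mul_inv_le_iff₀ hcβ]
      rw [mul_comm (α * β⁻¹) (clampFun m β)]
      calc clampFun m α = clampFun m α * β * β⁻¹ := by field_simp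
        _ ≤ clampFun m β * α * β⁻¹ := by
            apply mul_le_mul_of_nonneg_right key (by positivity)
        _ = clampFun m β * (α * β⁻¹) := by ring
    linarith



/-- pointwise polynomial approximation of a continuous function on ℝ -/
lemma exists_poly_tendsto (f : ℝ → ℝ) (hf : Continuous f) :
    ∃ p : ℕ → Polynomial ℝ, ∀ t : ℝ,
      Tendsto (fun k => (p k).eval t) atTop (nhds (f t)) := by
  have H : ∀ k : ℕ, ∃ p : Polynomial ℝ,
      ∀ t ∈ Set.Icc (-(k:ℝ)) (k:ℝ), |p.eval t - f t| < 1 / (k + 1) := by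
    intro k
    set g : C(Set.Icc (-(k:ℝ)) (k:ℝ), ℝ) :=
      ⟨_, (hf.continuousOn (s := Set.Icc (-(k:ℝ)) (k:ℝ))).restrict⟩ with hg
    obtain ⟨p, hp⟩ := exists_polynomial_near_continuousMap (-(k:ℝ)) (k:ℝ)
      g (1 / (k + 1)) (by positivity)
    refine ⟨p, fun t ht => ?_⟩
    have h2 := (ContinuousMap.norm_coe_le_norm
      (p.toContinuousMapOn _ - g) ⟨t, ht⟩).trans_lt hp
    simpa [Real.norm_eq_abs, hg] using h2
  choose p hp using H
  refine ⟨p, fun t => ?_⟩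
  rw [Metric.tendsto_atTop]
  intro ε hε
  obtain ⟨N, hN⟩ := exists_nat_gt (max |t| (1/ε))
  refine ⟨N, fun k hk => ?_⟩
  have htk : t ∈ Set.Icc (-(k:ℝ)) (k:ℝ) := by
    have h1 : |t| ≤ (k:ℝ) := by
      have := (le_max_left |t| (1/ε)).trans hN.le
      exact this.trans (by exact_mod_cast hk)
    rw [abs_le] at h1
    exact ⟨by linarith [h1.1], h1.2⟩
  have := hp k t htk
  rw [Real.dist_eq]
  refine this.trans_le ?_
  have hN1 : 1/ε < (N:ℝ) + 1 := by
    have := (le_max_right |t| (1/ε)).trans_lt hN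
    linarith
  have hk1 : (N:ℝ) + 1 ≤ (k:ℝ) + 1 := by
    have : (N:ℝ) ≤ k := by exact_mod_cast hk
    linarith
  rw [div_le_iff₀ (by positivity)]
  rw [div_lt_iff₀ hε] at hN1
  calc (1:ℝ) ≤ ε * ((N:ℝ)+1) := by linarith
    _ ≤ ε * ((k:ℝ)+1) := by nlinarith



lemma conj_diag_mul (U : Mat d) (hU' : star U * U = 1) (v w : Fin d → ℂ) :
    (U * diagonal v * star U) * (U * diagonal w * star U)
      = U * diagonal (v * w) * star U := by
  simp only [Matrix.mul_assoc]
  rw [← Matrix.mul_assoc (star U) U (diagonal w * star U), hU', Matrix.one_mul,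
    ← Matrix.mul_assoc (diagonal v) (diagonal w) (star U), diagonal_mul_diagonal]
  rfl

lemma conj_diag_pow (U : Mat d) (hU : U * star U = 1) (hU' : star U * U = 1)
    (v : Fin d → ℂ) (n : ℕ) :
    (U * diagonal v * star U) ^ n = U * diagonal (v ^ n) * star U := by
  induction n with
  | zero =>
      rw [pow_zero, pow_zero]
      have h0 : diagonal (1 : Fin d → ℂ) = (1 : Mat d) := Matrix.diagonal_one
      rw [h0, Matrix.mul_one, hU]
  | succ n ih => rw [pow_succ, ih, conj_diag_mul U hU', ← pow_succ]

lemma aeval_conj_diag (U : Mat d) (hU : U * star U = 1) (hU' : star U * U = 1)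
    (v : Fin d → ℂ) (p : Polynomial ℝ) :
    (Polynomial.aeval (U * diagonal v * star U) p : Mat d)
      = U * diagonal (fun i => Polynomial.aeval (v i) p) * star U := by
  induction p using Polynomial.induction_on' with
  | add p q hp hq =>
      rw [map_add, hp, hq]
      have h3 : (fun i => aeval (v i) (p + q))
          = fun i => aeval (v i) p + aeval (v i) q := by
        funext i; simp [map_add]
      rw [h3, ← diagonal_add, Matrix.mul_add, Matrix.add_mul]
  | monomial n c =>
      rw [aeval_monomial, conj_diag_pow U hU hU']
      have h1 : (fun i => aeval (v i) ((monomial n) c))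
          = fun i => c • (v i ^ n) := by
        funext i
        rw [aeval_monomial, Algebra.smul_def]
      rw [h1]
      have h2 : (diagonal fun i => c • v i ^ n) = c • diagonal (v ^ n) := by
        rw [← diagonal_smul]
        congr 1
      rw [h2, mul_smul_comm, smul_mul_assoc, ← Algebra.smul_def]

lemma conj_diag_entry (U : Mat d) (w : Fin d → ℂ) (i j : Fin d) :
    (U * diagonal w * star U) i j
      = ∑ l, U i l * w l * (starRingEnd ℂ) (U j l) := by
  rw [Matrix.mul_apply]
  refine Finset.sum_congr rfl fun l _ => ?_
  rw [Matrix.mul_diagonal, Matrix.star_apply]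
  rfl

lemma unitary_row_sum (U : Mat d) (hU : U * star U = 1) (i : Fin d) :
    ∑ l, ‖U i l‖^2 = (1:ℝ) := by
  have h := congrFun (congrFun hU i) i
  rw [Matrix.mul_apply, Matrix.one_apply_eq] at h
  have h2 : ∑ l, ((‖U i l‖^2 : ℝ) : ℂ) = 1 := by
    rw [← h]
    refine Finset.sum_congr rfl fun l _ => ?_
    rw [Matrix.star_apply, RCLike.star_def, RCLike.mul_conj]
    norm_cast
  exact_mod_cast h2

lemma trace_conj_diag_mul (U V : Mat d) (a b : Fin d → ℝ) :
    (Matrix.trace ((U * diagonal (Complex.ofReal ∘ a) * star U) *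
        (V * diagonal (Complex.ofReal ∘ b) * star V))).re
      = ∑ i, ∑ j, a i * b j * ‖(star U * V) i j‖^2 := by
  have key : ∀ (r s : ℝ) (z : ℂ),
      ((r:ℂ) * (z * (s:ℂ) * (starRingEnd ℂ) z)).re = r * s * ‖z‖^2 := by
    intro r s z
    have h1 : (r:ℂ) * (z * (s:ℂ) * (starRingEnd ℂ) z)
        = (r:ℂ) * (s:ℂ) * (z * (starRingEnd ℂ) z) := by ring
    have h2 : z * (starRingEnd ℂ) z = ((‖z‖^2 : ℝ) : ℂ) := by
      rw [Complex.mul_conj, Complex.sq_norm]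
    rw [h1, h2, ← Complex.ofReal_mul, ← Complex.ofReal_mul, Complex.ofReal_re]
  have hstep : (U * diagonal (Complex.ofReal ∘ a) * star U) *
        (V * diagonal (Complex.ofReal ∘ b) * star V)
      = U * (diagonal (Complex.ofReal ∘ a)
          * (star U * (V * (diagonal (Complex.ofReal ∘ b) * star V)))) := by
    simp only [Matrix.mul_assoc]
  rw [hstep, Matrix.trace_mul_comm]
  have hM : diagonal (Complex.ofReal ∘ a)
        * (star U * (V * (diagonal (Complex.ofReal ∘ b) * star V))) * U
      = diagonal (Complex.ofReal ∘ a)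
        * ((star U * V) * diagonal (Complex.ofReal ∘ b) * star (star U * V)) := by
    rw [Matrix.star_mul, star_star]
    simp only [Matrix.mul_assoc]
  rw [hM]
  set P := star U * V with hP
  have tr_eq : Matrix.trace (diagonal (Complex.ofReal ∘ a)
        * (P * diagonal (Complex.ofReal ∘ b) * star P))
      = ∑ i, (a i : ℂ) * ∑ j, P i j * (b j : ℂ) * (starRingEnd ℂ) (P i j) := by
    rw [Matrix.trace]
    refine Finset.sum_congr rfl fun i _ => ?_
    rw [Matrix.diag]
    rw [Matrix.diagonal_mul, conj_diag_entry]
    rfl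
  rw [tr_eq, Complex.re_sum]
  refine Finset.sum_congr rfl fun i _ => ?_
  rw [Finset.mul_sum, Complex.re_sum]
  exact Finset.sum_congr rfl fun j _ => key (a i) (b j) (P i j)

lemma unit_mul_star (U : Matrix.unitaryGroup (Fin d) ℂ) :
    (U : Mat d) * star (U : Mat d) = 1 := Matrix.mem_unitaryGroup_iff.mp U.2

lemma unit_star_mul (U : Matrix.unitaryGroup (Fin d) ℂ) :
    star (U : Mat d) * (U : Mat d) = 1 := Matrix.mem_unitaryGroup_iff'.mp U.2

lemma rclike_ofReal_eq : (RCLike.ofReal : ℝ → ℂ) = Complex.ofReal := rfl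

lemma conj_diag_inv (U : Matrix.unitaryGroup (Fin d) ℂ) (v : Fin d → ℂ)
    (hv : ∀ i, v i ≠ 0) :
    ((U : Mat d) * diagonal v * star (U : Mat d))⁻¹
      = (U : Mat d) * diagonal v⁻¹ * star (U : Mat d) := by
  apply Matrix.inv_eq_right_inv
  rw [conj_diag_mul _ (unit_star_mul U)]
  have h1 : v * v⁻¹ = 1 := by
    funext i; exact mul_inv_cancel₀ (hv i)
  rw [h1]
  have h0 : diagonal (1 : Fin d → ℂ) = (1 : Mat d) := Matrix.diagonal_one
  rw [h0, Matrix.mul_one, unit_mul_star]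

lemma conj_diag_entry_bound (U : Matrix.unitaryGroup (Fin d) ℂ) (w : Fin d → ℝ) {C : ℝ}
    (hC : 0 ≤ C) (hw : ∀ l, |w l| ≤ C) (i j : Fin d) :
    ‖((U : Mat d) * diagonal (Complex.ofReal ∘ w) * star (U : Mat d)) i j‖ ≤ C := by
  rw [conj_diag_entry]
  refine (norm_sum_le _ _).trans ?_
  have hrow1 := unitary_row_sum (U : Mat d) (unit_mul_star U) i
  have hrow2 := unitary_row_sum (U : Mat d) (unit_mul_star U) j
  have hterm : ∀ l : Fin d, ‖(U : Mat d) i l * (Complex.ofReal ∘ w) l *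
      (starRingEnd ℂ) ((U : Mat d) j l)‖
      ≤ C * ((‖(U : Mat d) i l‖^2 + ‖(U : Mat d) j l‖^2)/2) := by
    intro l
    rw [norm_mul, norm_mul, RCLike.norm_conj]
    have h1 : ‖((Complex.ofReal ∘ w) l : ℂ)‖ = |w l| := by
      simp [Complex.norm_real, Real.norm_eq_abs]
    rw [h1]
    have h2 := hw l
    have h3 : (0:ℝ) ≤ ‖(U : Mat d) i l‖ := norm_nonneg _
    have h4 : (0:ℝ) ≤ ‖(U : Mat d) j l‖ := norm_nonneg _
    have h5 : (0:ℝ) ≤ |w l| := abs_nonneg _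
    nlinarith [sq_nonneg (‖(U : Mat d) i l‖ - ‖(U : Mat d) j l‖)]
  calc ∑ l, ‖(U : Mat d) i l * (Complex.ofReal ∘ w) l *
        (starRingEnd ℂ) ((U : Mat d) j l)‖
      ≤ ∑ l, C * ((‖(U : Mat d) i l‖^2 + ‖(U : Mat d) j l‖^2)/2) :=
        Finset.sum_le_sum fun l _ => hterm l
    _ = C * ((∑ l, ‖(U : Mat d) i l‖^2) + (∑ l, ‖(U : Mat d) j l‖^2))/2 := by
        rw [← Finset.sum_add_distrib, Finset.mul_sum]
        rw [Finset.sum_div]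
        refine Finset.sum_congr rfl fun l _ => by ring
    _ = C := by rw [hrow1, hrow2]; ring

def clampInv (m : ℕ) (t : ℝ) : ℝ := (clampFun m t)⁻¹

lemma pointwise_trace_ineq {d : ℕ} (m : ℕ) (hm : 1 ≤ m) {A B : Mat d}
    (hA : A.PosSemidef) (hB : B.PosSemidef) (hdet : IsUnit B.det) :
    (Matrix.trace (hA.1.cfc (clampFun m) * (hB.1.cfc (clampFun m))⁻¹)).re
      ≤ d + (Matrix.trace (A * B⁻¹)).re := by
  set U := hA.1.eigenvectorUnitary with hUdef
  set V := hB.1.eigenvectorUnitary with hVdef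
  set α := hA.1.eigenvalues with hαdef
  set β := hB.1.eigenvalues with hβdef
  have hα : ∀ i, 0 ≤ α i := hA.eigenvalues_nonneg
  have hβ0 : ∀ j, 0 ≤ β j := hB.eigenvalues_nonneg
  have hβne : ∀ j, β j ≠ 0 := by
    intro j hj
    have hd : B.det = ∏ i, (β i : ℂ) := hB.1.det_eq_prod_eigenvalues
    have : B.det ≠ 0 := hdet.ne_zero
    rw [hd] at this
    exact this (Finset.prod_eq_zero (Finset.mem_univ j) (by rw [hj]; norm_num))
  have hβpos : ∀ j, 0 < β j := fun j => lt_of_le_of_ne (hβ0 j) (Ne.symm (hβne j))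
  -- rewrite the four matrices as conjugated diagonals
  have hcfcA : hA.1.cfc (clampFun m)
      = (U : Mat d) * diagonal (Complex.ofReal ∘ fun i => clampFun m (α i))
          * star (U : Mat d) := rfl
  have hcfcBinv : (hB.1.cfc (clampFun m))⁻¹
      = (V : Mat d) * diagonal (Complex.ofReal ∘ fun j => (clampFun m (β j))⁻¹)
          * star (V : Mat d) := by
    have h1 : hB.1.cfc (clampFun m)
        = (V : Mat d) * diagonal (Complex.ofReal ∘ fun j => clampFun m (β j))
            * star (V : Mat d) := rfl
    have hfun : (Complex.ofReal ∘ fun j => clampFun m (β j))⁻¹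
        = (Complex.ofReal ∘ fun j => (clampFun m (β j))⁻¹) := by
      funext j
      simp [Pi.inv_apply, Complex.ofReal_inv]
    rw [h1, conj_diag_inv _ _ (fun j => by
      simp only [Function.comp_apply, ne_eq, Complex.ofReal_eq_zero]
      exact (clamp_pos hm (β j)).ne'), hfun]
  have hAspec : A = (U : Mat d) * diagonal (Complex.ofReal ∘ α) * star (U : Mat d) :=
    hA.1.spectral_theorem
  have hBinv : B⁻¹
      = (V : Mat d) * diagonal (Complex.ofReal ∘ fun j => (β j)⁻¹) * star (V : Mat d) := by
    have h1 : B = (V : Mat d) * diagonal (Complex.ofReal ∘ β) * star (V : Mat d) :=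
      hB.1.spectral_theorem
    have hfun : (Complex.ofReal ∘ β)⁻¹
        = (Complex.ofReal ∘ fun j => (β j)⁻¹) := by
      funext j
      simp [Pi.inv_apply, Complex.ofReal_inv]
    rw [h1, conj_diag_inv _ _ (fun j => by
      simp only [Function.comp_apply, ne_eq, Complex.ofReal_eq_zero]
      exact hβne j), hfun]
  rw [hcfcA, hcfcBinv, hAspec, hBinv, trace_conj_diag_mul, trace_conj_diag_mul]
  -- row sums of P
  have hPP : (star (U : Mat d) * (V : Mat d)) * star (star (U : Mat d) * (V : Mat d)) = 1 := by
    rw [Matrix.star_mul, star_star]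
    calc star (U : Mat d) * (V : Mat d) * (star (V : Mat d) * (U : Mat d))
        = star (U : Mat d) * ((V : Mat d) * star (V : Mat d)) * (U : Mat d) := by
          simp only [Matrix.mul_assoc]
      _ = 1 := by rw [unit_mul_star V, Matrix.mul_one, unit_star_mul U]
  have hProw : ∀ i : Fin d, ∑ j, ‖(star (U : Mat d) * (V : Mat d)) i j‖^2 = 1 :=
    fun i => unitary_row_sum _ hPP i
  set c : Fin d → Fin d → ℝ := fun i j => ‖(star (U : Mat d) * (V : Mat d)) i j‖^2 with hc
  have hcnn : ∀ i j, 0 ≤ c i j := fun i j => sq_nonneg _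
  calc ∑ i, ∑ j, clampFun m (α i) * (clampFun m (β j))⁻¹ * c i j
      ≤ ∑ i, ∑ j, (1 + α i * (β j)⁻¹) * c i j := by
        refine Finset.sum_le_sum fun i _ => Finset.sum_le_sum fun j _ => ?_
        exact mul_le_mul_of_nonneg_right (clamp_ratio hm (hα i) (hβpos j)) (hcnn i j)
    _ = (∑ i, ∑ j, c i j) + ∑ i, ∑ j, α i * (β j)⁻¹ * c i j := by
        rw [← Finset.sum_add_distrib]
        refine Finset.sum_congr rfl fun i _ => ?_
        rw [← Finset.sum_add_distrib]
        refine Finset.sum_congr rfl fun j _ => by ring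
    _ = d + ∑ i, ∑ j, α i * (β j)⁻¹ * c i j := by
        congr 1
        have : ∀ i : Fin d, ∑ j, c i j = 1 := hProw
        rw [Finset.sum_congr rfl fun i _ => this i]
        simp

/-! ### Measurability of the functional calculus applied to a weight -/

def cfcW (W : ℝ → Mat d) (f : ℝ → ℝ) (x : ℝ) : Mat d :=
  @dite _ (W x).IsHermitian (Classical.dec _) (fun h => h.cfc f) (fun _ => 0)

lemma cfcW_entry_bound (W : ℝ → Mat d) (f : ℝ → ℝ) {C : ℝ} (hC : 0 ≤ C)
    (hf : ∀ t, |f t| ≤ C) (x : ℝ) (i j : Fin d) : ‖cfcW W f x i j‖ ≤ C := by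
  unfold cfcW
  split
  · rename_i h
    exact conj_diag_entry_bound h.eigenvectorUnitary (f ∘ h.eigenvalues) hC
      (fun l => hf _) i j
  · simp [hC]

lemma cfcW_aestronglyMeasurable (W : ℝ → Mat d)
    (hmeas : ∀ i j, AEStronglyMeasurable (fun x => W x i j) volume)
    (hherm : ∀ᵐ x ∂volume, (W x).IsHermitian)
    (f : ℝ → ℝ) (hf : Continuous f) (i j : Fin d) :
    AEStronglyMeasurable (fun x => cfcW W f x i j) volume := by
  classical
  -- measurable representative of W
  set W' : ℝ → Mat d := fun x => Matrix.of fun i j => (hmeas i j).mk _ x with hW'def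
  have hW'entry : ∀ i' j' : Fin d, Measurable fun x => W' x i' j' :=
    fun i' j' => ((hmeas i' j').stronglyMeasurable_mk).measurable
  have hpow : ∀ (n : ℕ) (i' j' : Fin d), Measurable fun x => (W' x ^ n) i' j' := by
    intro n
    induction n with
    | zero =>
        intro i' j'
        have h1 : (fun x => (W' x ^ 0) i' j') = fun _ => (1 : Mat d) i' j' := by
          funext x; rw [pow_zero]
        rw [h1]; exact measurable_const
    | succ n ih =>
        intro i' j'
        have h1 : (fun x => (W' x ^ (n+1)) i' j')
            = fun x => ∑ l, (W' x ^ n) i' l * W' x l j' := by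
          funext x; rw [pow_succ, Matrix.mul_apply]
        rw [h1]
        exact Finset.measurable_sum _ fun l _ => (ih i' l).mul (hW'entry l j')
  have haeval_meas : ∀ (q : Polynomial ℝ) (i' j' : Fin d),
      Measurable fun x => (Polynomial.aeval (W' x) q : Mat d) i' j' := by
    intro q
    induction q using Polynomial.induction_on' with
    | add r s hr hs =>
        intro i' j'
        have h1 : (fun x => (Polynomial.aeval (W' x) (r + s) : Mat d) i' j')
            = fun x => (Polynomial.aeval (W' x) r : Mat d) i' j'
                + (Polynomial.aeval (W' x) s : Mat d) i' j' := by
          funext x; rw [map_add]; rfl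
        rw [h1]; exact (hr i' j').add (hs i' j')
    | monomial n c =>
        intro i' j'
        have h1 : (fun x => (Polynomial.aeval (W' x) (Polynomial.monomial n c) : Mat d) i' j')
            = fun x => (c : ℂ) * (W' x ^ n) i' j' := by
          funext x
          rw [Polynomial.aeval_monomial, ← Algebra.smul_def]
          have h2 : (c • (W' x ^ n)) i' j' = c • ((W' x ^ n) i' j') := rfl
          rw [h2, Complex.real_smul]
        rw [h1]
        exact (hpow n i' j').const_mul _
  have hWW' : ∀ᵐ x ∂volume, W x = W' x := by
    have h1 : ∀ᵐ x ∂volume, ∀ i' : Fin d, ∀ j' : Fin d, W x i' j' = W' x i' j' := by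
      rw [MeasureTheory.ae_all_iff]
      intro i'
      rw [MeasureTheory.ae_all_iff]
      intro j'
      exact (hmeas i' j').ae_eq_mk
    filter_upwards [h1] with x hx
    ext i' j'
    exact hx i' j'
  obtain ⟨p, hp⟩ := exists_poly_tendsto f hf
  -- the approximating sequence
  have hFmeas : ∀ k : ℕ, AEStronglyMeasurable
      (fun x => (Polynomial.aeval (W' x) (p k) : Mat d) i j) volume := by
    intro k
    exact (haeval_meas (p k) i j).aestronglyMeasurable
  apply aestronglyMeasurable_of_tendsto_ae atTop hFmeas
  filter_upwards [hWW', hherm] with x hx hxh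
  -- pointwise convergence at Hermitian points
  have hxh' : (W' x).IsHermitian := hx ▸ hxh
  set U := hxh.eigenvectorUnitary with hUdef
  set lam := hxh.eigenvalues with hlamdef
  have hspec : W x = (U : Mat d) * diagonal (Complex.ofReal ∘ lam) * star (U : Mat d) :=
    hxh.spectral_theorem
  have hcfc : cfcW W f x = (U : Mat d) * diagonal (Complex.ofReal ∘ f ∘ lam)
      * star (U : Mat d) := by
    unfold cfcW
    rw [dif_pos hxh]
    rfl
  have haev : ∀ k, (Polynomial.aeval (W' x) (p k) : Mat d) i j
      = ∑ l, (U : Mat d) i l * Complex.ofReal ((p k).eval (lam l))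
          * (starRingEnd ℂ) ((U : Mat d) j l) := by
    intro k
    rw [← hx, hspec, aeval_conj_diag _ (unit_mul_star U) (unit_star_mul U)]
    rw [conj_diag_entry]
    refine Finset.sum_congr rfl fun l _ => ?_
    congr 2
    have : ((Complex.ofReal ∘ lam) l) = Complex.ofRealAm (lam l) := rfl
    rw [this, Polynomial.aeval_algHom_apply]
    rw [Polynomial.aeval_def]; rfl
  have htarget : cfcW W f x i j
      = ∑ l, (U : Mat d) i l * Complex.ofReal (f (lam l))
          * (starRingEnd ℂ) ((U : Mat d) j l) := by
    rw [hcfc, conj_diag_entry]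
    rfl
  rw [htarget]
  simp only [haev]
  apply tendsto_finset_sum
  intro l _
  apply Tendsto.mul_const
  apply Tendsto.const_mul
  exact (Complex.continuous_ofReal.tendsto _).comp (hp (lam l))

/-! ### Averages and traces as integrals -/

lemma re_setIntegral {s : Set ℝ} {f : ℝ → ℂ} (hf : IntegrableOn f s volume) :
    (∫ x in s, f x).re = ∫ x in s, (f x).re := by
  have h := integral_re hf
  rw [← RCLike.re_eq_complex_re]
  exact h.symm

lemma re_mul_ofReal (r : ℝ) (z : ℂ) : ((r:ℂ) * z).re = r * z.re := by
  simp [Complex.mul_re]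

lemma integrable_re_mul {s : Set ℝ} {g : ℝ → ℂ} (w : ℂ)
    (hg : IntegrableOn g s volume) :
    IntegrableOn (fun y => (w * g y).re) s volume := by
  have h1 : IntegrableOn (fun y => w * g y) s volume := hg.const_mul w
  have h2 := h1.re
  have h3 : (fun y => RCLike.re (w * g y)) = fun y => (w * g y).re := by
    funext y; rw [← RCLike.re_eq_complex_re]
  rwa [h3] at h2

lemma re_mul_avg_entry {s : Set ℝ} (c : ℝ) (w : ℂ) {g : ℝ → ℂ}
    (hg : IntegrableOn g s volume) :
    (w * (c • ∫ y in s, g y)).re = c * ∫ y in s, (w * g y).re := by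
  rw [Complex.real_smul]
  have h1 : w * ((c:ℂ) * ∫ y in s, g y) = (c:ℂ) * (w * ∫ y in s, g y) := by ring
  rw [h1, re_mul_ofReal]
  congr 1
  rw [← integral_const_mul, re_setIntegral (hg.const_mul w)]

lemma trace_re_eq_sum {d : ℕ} (M N : Mat d) :
    (Matrix.trace (M * N)).re = ∑ i, ∑ j, (M i j * N j i).re := by
  rw [Matrix.trace, Complex.re_sum]
  refine Finset.sum_congr rfl fun i _ => ?_
  rw [Matrix.diag, Matrix.mul_apply, Complex.re_sum]

lemma trace_avg_right {d : ℕ} (M : Mat d) (B : ℝ → Mat d) (a b : ℝ)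
    (hint : ∀ i j, IntegrableOn (fun y => B y i j) (Set.Ico a b) volume) :
    (Matrix.trace (M * avgI B a b)).re
      = (b - a)⁻¹ * ∫ y in Set.Ico a b, (Matrix.trace (M * B y)).re := by
  rw [trace_re_eq_sum]
  have hintij : ∀ i j : Fin d,
      IntegrableOn (fun y => (M i j * B y j i).re) (Set.Ico a b) volume :=
    fun i j => integrable_re_mul (M i j) (hint j i)
  have hR : ∫ y in Set.Ico a b, (Matrix.trace (M * B y)).re
      = ∑ i, ∑ j, ∫ y in Set.Ico a b, (M i j * B y j i).re := by
    have h0 : (fun y => (Matrix.trace (M * B y)).re)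
        = fun y => ∑ i, ∑ j, (M i j * B y j i).re := by
      funext y; exact trace_re_eq_sum M (B y)
    rw [h0, integral_finset_sum _
      (fun i _ => integrable_finset_sum _ (fun j _ => hintij i j))]
    exact Finset.sum_congr rfl fun i _ => integral_finset_sum _ (fun j _ => hintij i j)
  rw [hR, Finset.mul_sum]
  refine Finset.sum_congr rfl fun i _ => ?_
  rw [Finset.mul_sum]
  refine Finset.sum_congr rfl fun j _ => ?_
  have h1 : avgI B a b j i = (b - a)⁻¹ • ∫ y in Set.Ico a b, B y j i := rfl
  rw [h1, re_mul_avg_entry _ _ (hint j i)]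

lemma trace_avg_left {d : ℕ} (N : Mat d) (A : ℝ → Mat d) (a b : ℝ)
    (hint : ∀ i j, IntegrableOn (fun x => A x i j) (Set.Ico a b) volume) :
    (Matrix.trace (avgI A a b * N)).re
      = (b - a)⁻¹ * ∫ x in Set.Ico a b, (Matrix.trace (A x * N)).re := by
  rw [trace_re_eq_sum]
  have hintij : ∀ i j : Fin d,
      IntegrableOn (fun x => (A x i j * N j i).re) (Set.Ico a b) volume := by
    intro i j
    have h2 := integrable_re_mul (N j i) (hint i j)
    have h3 : (fun x => (N j i * A x i j).re) = fun x => (A x i j * N j i).re := by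
      funext x; rw [mul_comm]
    rwa [h3] at h2
  have hR : ∫ x in Set.Ico a b, (Matrix.trace (A x * N)).re
      = ∑ i, ∑ j, ∫ x in Set.Ico a b, (A x i j * N j i).re := by
    have h0 : (fun x => (Matrix.trace (A x * N)).re)
        = fun x => ∑ i, ∑ j, (A x i j * N j i).re := by
      funext x; exact trace_re_eq_sum (A x) N
    rw [h0, integral_finset_sum _
      (fun i _ => integrable_finset_sum _ (fun j _ => hintij i j))]
    exact Finset.sum_congr rfl fun i _ => integral_finset_sum _ (fun j _ => hintij i j)
  rw [hR, Finset.mul_sum]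
  refine Finset.sum_congr rfl fun i _ => ?_
  rw [Finset.mul_sum]
  refine Finset.sum_congr rfl fun j _ => ?_
  have h1 : avgI A a b i j = (b - a)⁻¹ • ∫ x in Set.Ico a b, A x i j := rfl
  rw [h1]
  have h4 : ((b - a)⁻¹ • ∫ x in Set.Ico a b, A x i j) * N j i
      = N j i * ((b - a)⁻¹ • ∫ x in Set.Ico a b, A x i j) := mul_comm _ _
  rw [h4, re_mul_avg_entry _ _ (hint i j)]
  congr 1
  refine integral_congr_ae (Eventually.of_forall fun x => ?_)
  show (N j i * A x i j).re = (A x i j * N j i).re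
  rw [mul_comm]

lemma trace_re_abs_bound {d : ℕ} (M N : Mat d) {C : ℝ}
    (hM : ∀ i j, ‖M i j‖ ≤ C) (hN : ∀ i j, ‖N i j‖ ≤ C) (hC : 0 ≤ C) :
    |(Matrix.trace (M * N)).re| ≤ (d:ℝ)^2 * C^2 := by
  rw [trace_re_eq_sum]
  calc |∑ i, ∑ j, (M i j * N j i).re| ≤ ∑ i, ∑ j, |(M i j * N j i).re| := by
        refine (Finset.abs_sum_le_sum_abs _ _).trans ?_
        exact Finset.sum_le_sum fun i _ => Finset.abs_sum_le_sum_abs _ _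
    _ ≤ ∑ i : Fin d, ∑ j : Fin d, C^2 := by
        refine Finset.sum_le_sum fun i _ => Finset.sum_le_sum fun j _ => ?_
        calc |(M i j * N j i).re| ≤ ‖M i j * N j i‖ := Complex.abs_re_le_norm _
          _ = ‖M i j‖ * ‖N j i‖ := norm_mul _ _
          _ ≤ C * C := mul_le_mul (hM i j) (hN j i) (norm_nonneg _) hC
          _ = C^2 := (sq C).symm
    _ = (d:ℝ)^2 * C^2 := by
        simp only [Finset.sum_const, Finset.card_univ, Fintype.card_fin, nsmul_eq_mul]
        ring

lemma integrableOn_of_bound {f : ℝ → ℝ} {a b : ℝ}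
    (hf : AEStronglyMeasurable f volume) (C : ℝ)
    (hb : ∀ᵐ x ∂volume, |f x| ≤ C) :
    IntegrableOn f (Set.Ico a b) volume := by
  haveI : IsFiniteMeasure (volume.restrict (Set.Ico a b)) := by
    constructor
    rw [Measure.restrict_apply_univ, Real.volume_Ico]
    exact ENNReal.ofReal_lt_top
  refine Integrable.mono' (integrable_const C) hf.restrict ?_
  refine ae_restrict_of_ae ?_
  filter_upwards [hb] with x hx
  rwa [Real.norm_eq_abs]

lemma cfc_clamp_inv {d : ℕ} {A : Mat d} (hA : A.IsHermitian) {m : ℕ} (hm : 1 ≤ m) :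
    (hA.cfc (clampFun m))⁻¹ = hA.cfc (clampInv m) := by
  have h1 : hA.cfc (clampFun m)
      = (hA.eigenvectorUnitary : Mat d)
        * diagonal (Complex.ofReal ∘ fun j => clampFun m (hA.eigenvalues j))
        * star (hA.eigenvectorUnitary : Mat d) := rfl
  have h2 : hA.cfc (clampInv m)
      = (hA.eigenvectorUnitary : Mat d)
        * diagonal (Complex.ofReal ∘ fun j => (clampFun m (hA.eigenvalues j))⁻¹)
        * star (hA.eigenvectorUnitary : Mat d) := rfl
  have hfun : (Complex.ofReal ∘ fun j => clampFun m (hA.eigenvalues j))⁻¹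
      = (Complex.ofReal ∘ fun j => (clampFun m (hA.eigenvalues j))⁻¹) := by
    funext j
    simp [Pi.inv_apply, Complex.ofReal_inv]
  rw [h1, h2, conj_diag_inv _ _ (fun j => by
    simp only [Function.comp_apply, ne_eq, Complex.ofReal_eq_zero]
    exact (clamp_pos hm (hA.eigenvalues j)).ne'), hfun]

lemma integrableOn_of_boundC {f : ℝ → ℂ} {a b : ℝ}
    (hf : AEStronglyMeasurable f volume) (C : ℝ)
    (hb : ∀ᵐ x ∂volume, ‖f x‖ ≤ C) :
    IntegrableOn f (Set.Ico a b) volume := by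
  haveI : IsFiniteMeasure (volume.restrict (Set.Ico a b)) := by
    constructor
    rw [Measure.restrict_apply_univ, Real.volume_Ico]
    exact ENNReal.ofReal_lt_top
  exact Integrable.mono' (integrable_const C) hf.restrict (ae_restrict_of_ae hb)

lemma integrable_re_mul' {s : Set ℝ} {g : ℝ → ℂ} (w : ℂ)
    (hg : IntegrableOn g s volume) :
    IntegrableOn (fun y => (g y * w).re) s volume := by
  have h := integrable_re_mul w hg
  have h3 : (fun y => (w * g y).re) = fun y => (g y * w).re := by
    funext y; rw [mul_comm]
  rwa [h3] at h

end Aux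

/-- **Trace comparison for the truncated weight**:
`Tr(⟨W_m⟩_I ⟨W_m⁻¹⟩_I) ≤ 2d + Tr(⟨W⟩_I ⟨W⁻¹⟩_I)`. -/
theorem truncation_trace_bound (d : ℕ) (W : ℝ → Mat d) (K : ℝ)
    (hW : IsA2Weight W K) (m : ℕ) (hm : 1 ≤ m) (a b : ℝ) (hab : a < b) :
    (Matrix.trace (avgI (truncW W m) a b *
        avgI (fun x => (truncW W m x)⁻¹) a b)).re
      ≤ 2 * (d : ℝ) +
        (Matrix.trace (avgI W a b * avgI (fun x => (W x)⁻¹) a b)).re := by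
  classical
  obtain ⟨⟨hWloc, hWpsd⟩, hWdet, ⟨hWinvloc, hWinvpsd⟩, hK1, hA2, hrest⟩ := hW
  haveI hfin : IsFiniteMeasure (volume.restrict (Set.Ico a b)) := by
    constructor
    rw [Measure.restrict_apply_univ, Real.volume_Ico]
    exact ENNReal.ofReal_lt_top
  have hherm : ∀ᵐ x ∂volume, (W x).IsHermitian := hWpsd.mono fun x h => h.1
  have hmpos : (0:ℝ) < m := by exact_mod_cast hm
  have habs_clamp : ∀ t, |clampFun m t| ≤ m := fun t => by
    rw [abs_of_pos (clamp_pos hm t)]; exact clamp_le t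
  have habs_ci : ∀ t, |clampInv m t| ≤ m := fun t => by
    show |(clampFun m t)⁻¹| ≤ (m:ℝ)
    rw [abs_of_pos (inv_pos.mpr (clamp_pos hm t))]; exact clamp_inv_le hm t
  have hciCont : Continuous (clampInv m) :=
    (clamp_continuous m).inv₀ fun t => (clamp_pos hm t).ne'
  have hWmeas : ∀ i j, AEStronglyMeasurable (fun x => W x i j) volume :=
    fun i j => (hWloc i j).aestronglyMeasurable
  have hWm_meas : ∀ i j, AEStronglyMeasurable (fun x => truncW W m x i j) volume :=
    fun i j => cfcW_aestronglyMeasurable W hWmeas hherm _ (clamp_continuous m) i j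
  have hWminv_ae : ∀ᵐ x ∂volume, (truncW W m x)⁻¹ = cfcW W (clampInv m) x := by
    filter_upwards [hherm] with x hx
    have h1 : truncW W m x = hx.cfc (clampFun m) := dif_pos hx
    have h2 : cfcW W (clampInv m) x = hx.cfc (clampInv m) := dif_pos hx
    rw [h1, h2, cfc_clamp_inv hx hm]
  have hWmi_meas : ∀ i j, AEStronglyMeasurable (fun x => (truncW W m x)⁻¹ i j) volume := by
    intro i j
    refine (cfcW_aestronglyMeasurable W hWmeas hherm _ hciCont i j).congr ?_
    filter_upwards [hWminv_ae] with x hx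
    rw [hx]
  have hWm_bound : ∀ x i j, ‖truncW W m x i j‖ ≤ m := fun x i j =>
    cfcW_entry_bound W (clampFun m) hmpos.le habs_clamp x i j
  have hWmi_bound : ∀ᵐ x ∂volume, ∀ i j, ‖(truncW W m x)⁻¹ i j‖ ≤ m := by
    filter_upwards [hWminv_ae] with x hx i j
    rw [hx]
    exact cfcW_entry_bound W (clampInv m) hmpos.le habs_ci x i j
  have hWm_int : ∀ i j, IntegrableOn (fun x => truncW W m x i j) (Set.Ico a b) volume :=
    fun i j => integrableOn_of_boundC (hWm_meas i j) m
      (Eventually.of_forall fun x => hWm_bound x i j)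
  have hWmi_int : ∀ i j, IntegrableOn (fun x => (truncW W m x)⁻¹ i j) (Set.Ico a b) volume :=
    fun i j => integrableOn_of_boundC (hWmi_meas i j) m
      (hWmi_bound.mono fun x hx => hx i j)
  have hW_int : ∀ i j, IntegrableOn (fun x => W x i j) (Set.Ico a b) volume :=
    fun i j => ((hWloc i j).integrableOn_isCompact isCompact_Icc).mono_set
      Set.Ico_subset_Icc_self
  have hWi_int : ∀ i j, IntegrableOn (fun x => (W x)⁻¹ i j) (Set.Ico a b) volume :=
    fun i j => ((hWinvloc i j).integrableOn_isCompact isCompact_Icc).mono_set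
      Set.Ico_subset_Icc_self
  set N2 := avgI (fun x => (truncW W m x)⁻¹) a b with hN2
  set C2 := avgI (fun x => (W x)⁻¹) a b with hC2
  have hba : (0:ℝ) < b - a := by linarith
  have hbane : (b - a) ≠ 0 := hba.ne'
  -- a.e. pointwise comparison of inner traces
  have hkey : ∀ᵐ x ∂volume,
      (Matrix.trace (truncW W m x * N2)).re
        ≤ (d:ℝ) + (Matrix.trace (W x * C2)).re := by
    filter_upwards [hWpsd, hWdet] with x hpsd hdet
    have hL : (Matrix.trace (truncW W m x * N2)).re
        = (b-a)⁻¹ * ∫ y in Set.Ico a b,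
            (Matrix.trace (truncW W m x * (truncW W m y)⁻¹)).re :=
      trace_avg_right _ _ a b hWmi_int
    have hR : (Matrix.trace (W x * C2)).re
        = (b-a)⁻¹ * ∫ y in Set.Ico a b, (Matrix.trace (W x * (W y)⁻¹)).re :=
      trace_avg_right _ _ a b hWi_int
    rw [hL, hR]
    have hptwise : ∀ᵐ y ∂volume,
        (Matrix.trace (truncW W m x * (truncW W m y)⁻¹)).re
          ≤ (d:ℝ) + (Matrix.trace (W x * (W y)⁻¹)).re := by
      filter_upwards [hWpsd, hWdet] with y hypsd hydet
      have h1 : truncW W m x = hpsd.1.cfc (clampFun m) := dif_pos hpsd.1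
      have h2 : truncW W m y = hypsd.1.cfc (clampFun m) := dif_pos hypsd.1
      rw [h1, h2]
      exact pointwise_trace_ineq m hm hpsd hypsd hydet
    have hint1 : IntegrableOn
        (fun y => (Matrix.trace (truncW W m x * (truncW W m y)⁻¹)).re)
        (Set.Ico a b) volume := by
      have h0 : (fun y => (Matrix.trace (truncW W m x * (truncW W m y)⁻¹)).re)
          = fun y => ∑ i, ∑ j, (truncW W m x i j * (truncW W m y)⁻¹ j i).re :=
        funext fun y => trace_re_eq_sum _ _
      rw [h0]
      refine integrable_finset_sum _ fun i _ => integrable_finset_sum _ fun j _ => ?_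
      exact integrable_re_mul _ (hWmi_int j i)
    have hint3 : IntegrableOn
        (fun y => (Matrix.trace (W x * (W y)⁻¹)).re) (Set.Ico a b) volume := by
      have h0 : (fun y => (Matrix.trace (W x * (W y)⁻¹)).re)
          = fun y => ∑ i, ∑ j, (W x i j * (W y)⁻¹ j i).re :=
        funext fun y => trace_re_eq_sum _ _
      rw [h0]
      refine integrable_finset_sum _ fun i _ => integrable_finset_sum _ fun j _ => ?_
      exact integrable_re_mul _ (hWi_int j i)
    have hint2 : IntegrableOn
        (fun y => (d:ℝ) + (Matrix.trace (W x * (W y)⁻¹)).re) (Set.Ico a b) volume :=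
      (integrable_const _).add hint3
    have hstep : ∫ y in Set.Ico a b,
          (Matrix.trace (truncW W m x * (truncW W m y)⁻¹)).re
        ≤ ∫ y in Set.Ico a b, ((d:ℝ) + (Matrix.trace (W x * (W y)⁻¹)).re) :=
      integral_mono_ae hint1 hint2 (ae_restrict_of_ae hptwise)
    have hsplit : ∫ y in Set.Ico a b, ((d:ℝ) + (Matrix.trace (W x * (W y)⁻¹)).re)
        = (d:ℝ) * (b - a) + ∫ y in Set.Ico a b, (Matrix.trace (W x * (W y)⁻¹)).re := by
      rw [integral_add (integrable_const _) hint3, setIntegral_const,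
        Real.volume_real_Ico_of_le hab.le, smul_eq_mul]
      ring
    calc (b-a)⁻¹ * ∫ y in Set.Ico a b,
          (Matrix.trace (truncW W m x * (truncW W m y)⁻¹)).re
        ≤ (b-a)⁻¹ * ((d:ℝ) * (b - a)
            + ∫ y in Set.Ico a b, (Matrix.trace (W x * (W y)⁻¹)).re) := by
          refine mul_le_mul_of_nonneg_left ?_ (inv_nonneg.mpr hba.le)
          rw [← hsplit]; exact hstep
      _ = (d:ℝ) + (b-a)⁻¹ * ∫ y in Set.Ico a b, (Matrix.trace (W x * (W y)⁻¹)).re := by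
          field_simp
  -- outer integration
  have hg_int : IntegrableOn (fun x => (Matrix.trace (truncW W m x * N2)).re)
      (Set.Ico a b) volume := by
    have h0 : (fun x => (Matrix.trace (truncW W m x * N2)).re)
        = fun x => ∑ i, ∑ j, (truncW W m x i j * N2 j i).re :=
      funext fun x => trace_re_eq_sum _ _
    rw [h0]
    refine integrable_finset_sum _ fun i _ => integrable_finset_sum _ fun j _ => ?_
    exact integrable_re_mul' _ (hWm_int i j)
  have hWC2_int : IntegrableOn (fun x => (Matrix.trace (W x * C2)).re)
      (Set.Ico a b) volume := by
    have h0 : (fun x => (Matrix.trace (W x * C2)).re)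
        = fun x => ∑ i, ∑ j, (W x i j * C2 j i).re :=
      funext fun x => trace_re_eq_sum _ _
    rw [h0]
    refine integrable_finset_sum _ fun i _ => integrable_finset_sum _ fun j _ => ?_
    exact integrable_re_mul' _ (hW_int i j)
  have hh_int : IntegrableOn (fun x => (d:ℝ) + (Matrix.trace (W x * C2)).re)
      (Set.Ico a b) volume := (integrable_const _).add hWC2_int
  have houter : ∫ x in Set.Ico a b, (Matrix.trace (truncW W m x * N2)).re
      ≤ ∫ x in Set.Ico a b, ((d:ℝ) + (Matrix.trace (W x * C2)).re) :=
    integral_mono_ae hg_int hh_int (ae_restrict_of_ae hkey)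
  have hsplit2 : ∫ x in Set.Ico a b, ((d:ℝ) + (Matrix.trace (W x * C2)).re)
      = (d:ℝ) * (b - a) + ∫ x in Set.Ico a b, (Matrix.trace (W x * C2)).re := by
    rw [integral_add (integrable_const _) hWC2_int, setIntegral_const,
      Real.volume_real_Ico_of_le hab.le, smul_eq_mul]
    ring
  have hdnn : (0:ℝ) ≤ d := Nat.cast_nonneg d
  calc (Matrix.trace (avgI (truncW W m) a b * N2)).re
      = (b-a)⁻¹ * ∫ x in Set.Ico a b, (Matrix.trace (truncW W m x * N2)).re :=
        trace_avg_left _ _ a b hWm_int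
    _ ≤ (b-a)⁻¹ * ((d:ℝ) * (b - a) + ∫ x in Set.Ico a b, (Matrix.trace (W x * C2)).re) := by
        refine mul_le_mul_of_nonneg_left ?_ (inv_nonneg.mpr hba.le)
        rw [← hsplit2]; exact houter
    _ = (d:ℝ) + (b-a)⁻¹ * ∫ x in Set.Ico a b, (Matrix.trace (W x * C2)).re := by
        field_simp
    _ = (d:ℝ) + (Matrix.trace (avgI W a b * C2)).re := by
        rw [trace_avg_left _ _ a b hW_int]
    _ ≤ 2 * (d:ℝ) + (Matrix.trace (avgI W a b * C2)).re := by linarith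


end
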